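/- arXiv:1802.05064 — 4 statements merged into one kernel-verified Lean document; each statement's English description precedes it below -/
import Mathlib

section
/- Let $h: [0,\infty) \to [0,1]$ be a non-increasing function satisfying $h(x)^d = \int_x^\infty h(u)\,du$ for all $x \ge 0$, where $d \ge 2$ is an integer, and $h(0) = 1$. Then $h(x) = (1 - \frac{d-1}{d}x)^{1/(d-1)}$ for $x \in [0, d/(d-1)]$ and $h(x) = 0$ for $x \ge d/(d-1)$. -/
open MeasureTheory Set Filter

/-- If `h : [0,∞) → [0,1]` is non-increasing with `h 0 = 1` and
`h(x)^d = ∫_x^∞ h(u) du`, then `h(x) = (1 - (d-1)/d · x)^{1/(d-1)}` on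
`[0, d/(d-1)]` and `h = 0` beyond `d/(d-1)`. -/
theorem survival_integral_equation_unique (d : ℕ) (hd : 2 ≤ d) (h : ℝ → ℝ)
    (hrange : ∀ x, 0 ≤ x → h x ∈ Set.Icc (0 : ℝ) 1)
    (hanti : ∀ x y, 0 ≤ x → x ≤ y → h y ≤ h x)
    (h0 : h 0 = 1)
    (heq : ∀ x, 0 ≤ x → (h x) ^ d = ∫ u in Set.Ioi x, h u) :
    (∀ x : ℝ, x ∈ Set.Icc 0 ((d : ℝ) / (d - 1)) →
        h x = (1 - (d - 1) / d * x) ^ ((1 : ℝ) / (d - 1))) ∧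
    (∀ x : ℝ, (d : ℝ) / (d - 1) ≤ x → h x = 0) := by
  set D : ℝ := (d : ℝ) with hDdef
  have hD2 : (2:ℝ) ≤ D := by rw [hDdef]; exact_mod_cast hd
  have hD0 : (0:ℝ) < D := by linarith
  have hD1 : (0:ℝ) < D - 1 := by linarith
  set p : ℝ := (D - 1) / D with hpdef
  have hp0 : 0 < p := div_pos hD1 hD0
  set T : ℝ := D / (D - 1) with hTdef
  have hT0 : 0 < T := div_pos hD0 hD1
  have hpT : p * T = 1 := by rw [hpdef, hTdef]; field_simp
  have hnn : ∀ x, 0 ≤ x → 0 ≤ h x := fun x hx => (hrange x hx).1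
  -- integrability on Ioi 0
  have hint1 : (∫ u in Set.Ioi (0:ℝ), h u) = 1 := by
    rw [← heq 0 le_rfl, h0, one_pow]
  have hIntIoi : IntegrableOn h (Set.Ioi (0:ℝ)) := by
    by_contra hc
    rw [MeasureTheory.integral_undef hc] at hint1
    norm_num at hint1
  have hIntIcc : ∀ B : ℝ, IntegrableOn h (Set.Icc 0 B) := by
    intro B
    rw [integrableOn_Icc_iff_integrableOn_Ioc]
    exact hIntIoi.mono_set Set.Ioc_subset_Ioi_self
  -- the primitive
  set F : ℝ → ℝ := fun x => ∫ t in Set.Ioc 0 x, h t with hFdef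
  have hF0 : F 0 = 0 := by simp [hFdef]
  -- split equation
  have heq' : ∀ x, 0 ≤ x → (h x) ^ d = 1 - F x := by
    intro x hx
    have hsplit : (∫ u in Set.Ioi (0:ℝ), h u)
        = F x + ∫ u in Set.Ioi x, h u := by
      rw [hFdef, ← MeasureTheory.setIntegral_union (Set.Ioc_disjoint_Ioi le_rfl)
        measurableSet_Ioi (hIntIoi.mono_set Set.Ioc_subset_Ioi_self)
        (hIntIoi.mono_set (Set.Ioi_subset_Ioi hx)), Set.Ioc_union_Ioi_eq_Ioi hx]
    rw [heq x hx]
    rw [hint1] at hsplit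
    linarith
  -- continuity of h on Icc 0 B
  have hrec : ∀ x, 0 ≤ x → (1 - F x) ^ ((1:ℝ)/D) = h x := by
    intro x hx
    rw [← heq' x hx, ← Real.rpow_natCast (h x) d, ← Real.rpow_mul (hnn x hx),
      ← hDdef, mul_one_div, div_self (ne_of_gt hD0), Real.rpow_one]
  have hcont : ∀ B : ℝ, ContinuousOn h (Set.Icc 0 B) := by
    intro B
    have hFc : ContinuousOn F (Set.Icc 0 B) :=
      intervalIntegral.continuousOn_primitive (hIntIcc B)
    have hgc : ContinuousOn (fun x => (1 - F x) ^ ((1:ℝ)/D)) (Set.Icc 0 B) := by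
      apply ContinuousOn.comp (g := fun y : ℝ => y ^ ((1:ℝ)/D))
        (continuousOn_of_forall_continuousAt (fun y _ =>
          Real.continuousAt_rpow_const y _ (Or.inr (by positivity))))
        (continuousOn_const.sub hFc)
      exact Set.mapsTo_univ _ _
    exact hgc.congr fun x hx => (hrec x hx.1).symm
  -- key lemma
  have key : ∀ b, 0 ≤ b → 0 < h b → ∀ x ∈ Set.Icc (0:ℝ) b,
      h x ^ (D - 1) = 1 - p * x := by
    intro b hb hhb
    have hposb : ∀ x ∈ Set.Icc (0:ℝ) b, 0 < h x := fun x hx =>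
      lt_of_lt_of_le hhb (hanti x b hx.1 hx.2)
    set Ψ : ℝ → ℝ := fun y => (1 - F y) ^ p + p * y with hΨdef
    have hΨcont : ContinuousOn Ψ (Set.Icc 0 b) := by
      have hFc : ContinuousOn F (Set.Icc 0 b) :=
        intervalIntegral.continuousOn_primitive (hIntIcc b)
      refine ContinuousOn.add ?_ (continuous_const.mul continuous_id).continuousOn
      apply ContinuousOn.comp (g := fun y : ℝ => y ^ p)
        (continuousOn_of_forall_continuousAt (fun y _ =>
          Real.continuousAt_rpow_const y _ (Or.inr hp0.le)))
        (continuousOn_const.sub hFc)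
      exact Set.mapsTo_univ _ _
    have hΨderiv : ∀ x ∈ Set.Ico (0:ℝ) b, HasDerivWithinAt Ψ 0 (Set.Ici x) x := by
      intro x hx
      obtain ⟨hx0, hxb⟩ := hx
      have hhx : 0 < h x := hposb x ⟨hx0, hxb.le⟩
      have hne' : h x ≠ 0 := ne_of_gt hhx
      have hii : IntervalIntegrable h volume 0 x := by
        rw [intervalIntegrable_iff_integrableOn_Ioc_of_le hx0]
        exact hIntIoi.mono_set Set.Ioc_subset_Ioi_self
      have hmemIoo : Set.Ioo x (x+1) ∈ nhdsWithin x (Set.Ioi x) := by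
        rw [← Set.Ioi_inter_Iio]
        exact Filter.inter_mem self_mem_nhdsWithin
          (mem_nhdsWithin_of_mem_nhds (Iio_mem_nhds (by linarith)))
      have hmeas : StronglyMeasurableAtFilter h (nhdsWithin x (Set.Ioi x)) := by
        refine ⟨Set.Ioo x (x+1), hmemIoo, ?_⟩
        exact ((hIntIcc (x+1)).mono_set (fun y hy =>
          ⟨le_trans hx0 hy.1.le, hy.2.le⟩)).aestronglyMeasurable
      have hcw : ContinuousWithinAt h (Set.Ioi x) x := by
        have := (hcont (x+1)) x ⟨hx0, by linarith⟩
        exact this.mono_of_mem_nhdsWithin (Filter.mem_of_superset hmemIoo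
          (fun y hy => ⟨le_trans hx0 hy.1.le, hy.2.le⟩))
      have hFder : HasDerivWithinAt (fun u => ∫ t in (0:ℝ)..u, h t) (h x)
          (Set.Ici x) x :=
        intervalIntegral.integral_hasDerivWithinAt_right hii hmeas hcw
      have hFder' : HasDerivWithinAt F (h x) (Set.Ici x) x := by
        refine hFder.congr (fun y hy => ?_) ?_
        · rw [intervalIntegral.integral_of_le (le_trans hx0 hy)]
        · rw [intervalIntegral.integral_of_le hx0]
      have h1 : HasDerivWithinAt (fun y => 1 - F y) (-(h x)) (Set.Ici x) x :=
        hFder'.const_sub 1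
      have hfx : (1 : ℝ) - F x = h x ^ d := (heq' x hx0).symm
      have hfxne : (1 : ℝ) - F x ≠ 0 := by
        rw [hfx]; positivity
      have h2 := h1.rpow_const (p := p) (Or.inl hfxne)
      have h3 := h2.add ((hasDerivWithinAt_id x (Set.Ici x)).const_mul p)
      have e1 : ((h x) ^ d : ℝ) ^ (p - 1) = (h x)⁻¹ := by
        rw [← Real.rpow_natCast (h x) d, ← Real.rpow_mul (hnn x hx0), ← hDdef]
        have hDp : D * (p - 1) = -1 := by
          rw [hpdef]; field_simp; ring
        rw [hDp, Real.rpow_neg_one]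
      have hzero : -(h x) * p * (h x)⁻¹ + p * 1 = 0 := by
        field_simp
        ring
      rw [hfx, e1, hzero] at h3
      exact h3
    have hconst := constant_of_has_deriv_right_zero hΨcont hΨderiv
    intro x hx
    have hΨx := hconst x hx
    have hΨ0 : Ψ 0 = 1 := by
      simp [hΨdef, hF0, Real.one_rpow]
    have e2 : (1 - F x) ^ p = h x ^ (D - 1) := by
      rw [← heq' x hx.1, ← Real.rpow_natCast (h x) d, ← Real.rpow_mul (hnn x hx.1),
        ← hDdef]
      congr 1
      rw [hpdef]; field_simp
    have h5 := hΨx.trans hΨ0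
    simp only [hΨdef] at h5
    rw [e2] at h5
    linarith
  -- the zero set is nonempty
  have hSne : ∃ x : ℝ, 0 ≤ x ∧ h x = 0 := by
    by_contra hc
    push_neg at hc
    have hb : 0 < h (2*D) :=
      lt_of_le_of_ne (hnn _ (by positivity)) (Ne.symm (hc _ (by positivity)))
    have hk := key (2*D) (by positivity) hb (2*D) ⟨by positivity, le_rfl⟩
    have hlhs : 0 < h (2*D) ^ (D - 1) := Real.rpow_pos_of_pos hb _
    have hcompute : p * (2*D) = 2*(D-1) := by
      rw [hpdef]; field_simp
    rw [hk, hcompute] at hlhs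
    linarith
  set S := {x : ℝ | 0 ≤ x ∧ h x = 0} with hSdef
  have hSne' : S.Nonempty := hSne
  have hSbdd : BddBelow S := ⟨0, fun x hx => hx.1⟩
  set x0 := sInf S with hx0def
  have hx00 : 0 ≤ x0 := le_csInf hSne' (fun x hx => hx.1)
  have hpos : ∀ y, 0 ≤ y → y < x0 → 0 < h y := by
    intro y hy hlt
    rcases (hnn y hy).lt_or_eq with hgt | heq0
    · exact hgt
    · exact absurd (csInf_le hSbdd ⟨hy, heq0.symm⟩) (not_le.mpr hlt)
  have hzero : ∀ x, x0 < x → h x = 0 := by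
    intro x hlt
    obtain ⟨s, hs, hsx⟩ := (csInf_lt_iff hSbdd hSne').mp hlt
    have h1 := hanti s x hs.1 hsx.le
    have h2 := hnn x (le_trans hs.1 hsx.le)
    linarith [hs.2]
  have hx0zero : h x0 = 0 := by
    have hcw : ContinuousWithinAt h (Set.Icc 0 (x0+1)) x0 :=
      (hcont (x0+1)) x0 ⟨hx00, by linarith⟩
    have hneb : (nhdsWithin x0 (Set.Ioo x0 (x0+1))).NeBot := by
      apply mem_closure_iff_nhdsWithin_neBot.mp
      rw [closure_Ioo (by linarith : x0 ≠ x0 + 1)]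
      exact ⟨le_rfl, by linarith⟩
    have t1 : Tendsto h (nhdsWithin x0 (Set.Ioo x0 (x0+1))) (nhds (h x0)) :=
      hcw.tendsto.mono_left (nhdsWithin_mono _
        (fun y hy => ⟨le_trans hx00 hy.1.le, hy.2.le⟩))
    have t2 : Tendsto h (nhdsWithin x0 (Set.Ioo x0 (x0+1))) (nhds 0) := by
      refine Filter.Tendsto.congr' ?_ tendsto_const_nhds
      filter_upwards [self_mem_nhdsWithin] with y hy
      exact (hzero y hy.1).symm
    exact tendsto_nhds_unique t1 t2
  have hx0pos : 0 < x0 := by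
    rcases hx00.lt_or_eq with h' | h'
    · exact h'
    · exfalso
      rw [← h', h0] at hx0zero
      norm_num at hx0zero
  have hx0T : x0 = T := by
    have hneb : (nhdsWithin x0 (Set.Ioo 0 x0)).NeBot := by
      apply mem_closure_iff_nhdsWithin_neBot.mp
      rw [closure_Ioo (ne_of_lt hx0pos)]
      exact ⟨hx00, le_rfl⟩
    have t1 : Tendsto (fun y => h y ^ (D-1)) (nhdsWithin x0 (Set.Ioo 0 x0))
        (nhds (h x0 ^ (D - 1))) := by
      have hcw : ContinuousWithinAt h (Set.Icc 0 x0) x0 :=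
        (hcont x0) x0 ⟨hx00, le_rfl⟩
      have ht : Tendsto h (nhdsWithin x0 (Set.Ioo 0 x0)) (nhds (h x0)) :=
        hcw.tendsto.mono_left (nhdsWithin_mono _ (fun y hy => ⟨hy.1.le, hy.2.le⟩))
      exact (Real.continuousAt_rpow_const _ _ (Or.inr (by linarith))).tendsto.comp ht
    have t2 : Tendsto (fun y => h y ^ (D-1)) (nhdsWithin x0 (Set.Ioo 0 x0))
        (nhds (1 - p * x0)) := by
      have hlin : Tendsto (fun y : ℝ => 1 - p * y) (nhdsWithin x0 (Set.Ioo 0 x0))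
          (nhds (1 - p * x0)) :=
        (Continuous.tendsto (continuous_const.sub (continuous_const.mul continuous_id)) x0).mono_left nhdsWithin_le_nhds
      refine hlin.congr' ?_
      filter_upwards [self_mem_nhdsWithin] with y hy
      exact (key y hy.1.le (hpos y hy.1.le hy.2) y ⟨hy.1.le, le_rfl⟩).symm
    have heq2 := tendsto_nhds_unique t1 t2
    rw [hx0zero, Real.zero_rpow (by linarith : D - 1 ≠ 0)] at heq2
    have : p * x0 = p * T := by rw [hpT]; linarith
    exact mul_left_cancel₀ (ne_of_gt hp0) this
  constructor
  · intro x hx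
    rcases lt_or_eq_of_le hx.2 with hlt | heqT
    · have hxpos := hpos x hx.1 (by rw [hx0T]; exact hlt)
      have hk := key x hx.1 hxpos x ⟨hx.1, le_rfl⟩
      have e3 : (h x ^ (D-1)) ^ ((1:ℝ)/(D-1)) = h x := by
        rw [← Real.rpow_mul (hnn x hx.1), mul_one_div, div_self (ne_of_gt hD1),
          Real.rpow_one]
      rw [← e3, hk]
    · rw [heqT, hpT, sub_self, Real.zero_rpow (one_div_ne_zero (ne_of_gt hD1))]
      rw [← hx0T]
      exact hx0zero
  · intro x hx
    have h1 := hanti T x hT0.le hx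
    have h2 := hnn x (le_trans hT0.le hx)
    rw [← hx0T, hx0zero] at h1
    linarith
end

section
/- Let $\Psi$ be a bounded nonnegative function on $M_1(\mathbb{N}) \times \mathbb{N}$ satisfying $|\Psi(\sigma,l)-\Psi(\sigma',l)| \le D_\Psi\|\sigma-\sigma'\|_{tv}$, and define for $\sigma \in M_1(\mathbb{N})$ the operator $\Omega_\sigma(f)(x) = \beta\Psi(\sigma,x)(f(x+1)-f(x)) + (f(0)-f(x))$. Then for any $f: \mathbb{N}\to\mathbb{R}$ with $\|\nabla_1 f\|_\infty = \sup_x|f(x+1)-f(x)| < \infty$, and any $\sigma, \sigma' \in M_1(\mathbb{N})$ for which $f$ is integrable: $|\langle\sigma, \Omega_\sigma f\rangle - \langle\sigma', \Omega_{\sigma'} f\rangle| \le 2\beta\|\nabla_1 f\|_\infty(\|\Psi\|_\infty + D_\Psi)\|\sigma-\sigma'\|_{tv} + |\langle\sigma - \sigma', f\rangle|$. -/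
private lemma abs_tsum_le_tsum_abs' (g : ℕ → ℝ) (hg : Summable g) :
    |∑' x, g x| ≤ ∑' x, |g x| := by
  simpa [Real.norm_eq_abs] using norm_tsum_le_tsum_norm
    (by simpa [Real.norm_eq_abs] using hg.abs : Summable fun x => ‖g x‖)


/-- Lipschitz-type estimate for the generator
`Ω_σ f (x) = β Ψ(σ,x)(f(x+1) - f(x)) + (f 0 - f x)` of the McKean-Vlasov process:
`|⟨σ, Ω_σ f⟩ - ⟨σ', Ω_{σ'} f⟩| ≤ 2 β ‖∇₁f‖_∞ (‖Ψ‖_∞ + D_Ψ) ‖σ - σ'‖_tv + |⟨σ - σ', f⟩|`.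
Probability distributions on `ℕ` are represented as nonnegative functions summing to `1`,
and `‖σ - σ'‖_tv = (1/2) ∑ |σ(k) - σ'(k)|`. -/
theorem generator_lipschitz_estimate (β : ℝ) (hβ : 0 < β)
    (Ψ : (ℕ → ℝ) → ℕ → ℝ) (MΨ DΨ : ℝ)
    (hbound : ∀ σ x, 0 ≤ Ψ σ x ∧ Ψ σ x ≤ MΨ)
    (hLip : ∀ σ σ' : ℕ → ℝ, ∀ l, (∀ n, 0 ≤ σ n) → (∀ n, 0 ≤ σ' n) →
      (∑' n, σ n) = 1 → (∑' n, σ' n) = 1 →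
      |Ψ σ l - Ψ σ' l| ≤ DΨ * ((1 / 2) * ∑' k, |σ k - σ' k|))
    (f : ℕ → ℝ) (L : ℝ) (hL : ∀ x, |f (x + 1) - f x| ≤ L)
    (σ σ' : ℕ → ℝ) (hσ : ∀ n, 0 ≤ σ n) (hσ' : ∀ n, 0 ≤ σ' n)
    (hσ1 : (∑' n, σ n) = 1) (hσ'1 : (∑' n, σ' n) = 1)
    (hfσ : Summable (fun k => f k * σ k)) (hfσ' : Summable (fun k => f k * σ' k)) :
    |(∑' x, (β * Ψ σ x * (f (x + 1) - f x) + (f 0 - f x)) * σ x)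
        - (∑' x, (β * Ψ σ' x * (f (x + 1) - f x) + (f 0 - f x)) * σ' x)|
      ≤ 2 * β * L * (MΨ + DΨ) * ((1 / 2) * ∑' k, |σ k - σ' k|)
        + |∑' x, f x * (σ x - σ' x)| := by
  set tv : ℝ := (1 / 2) * ∑' k, |σ k - σ' k| with htv
  have hM : 0 ≤ MΨ := le_trans (hbound σ 0).1 (hbound σ 0).2
  have hL0 : 0 ≤ L := le_trans (abs_nonneg _) (hL 0)
  have hDtv : 0 ≤ DΨ * tv := le_trans (abs_nonneg _) (hLip σ σ' 0 hσ hσ' hσ1 hσ'1)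
  have hSumσ : Summable σ := by
    by_contra h
    rw [tsum_eq_zero_of_not_summable h] at hσ1
    norm_num at hσ1
  have hSumσ' : Summable σ' := by
    by_contra h
    rw [tsum_eq_zero_of_not_summable h] at hσ'1
    norm_num at hσ'1
  have hd : Summable (fun k => σ k - σ' k) := hSumσ.sub hSumσ'
  have hda : Summable (fun k => |σ k - σ' k|) := hd.abs
  have htvnn : 0 ≤ tv := by
    have : 0 ≤ ∑' k, |σ k - σ' k| := tsum_nonneg (fun k => abs_nonneg _)
    positivity
  -- pieces
  set A : ℕ → ℝ := fun x => β * (Ψ σ x - Ψ σ' x) * (f (x + 1) - f x) * σ x with hA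
  set B : ℕ → ℝ := fun x => β * Ψ σ' x * (f (x + 1) - f x) * (σ x - σ' x) with hB
  set C : ℕ → ℝ := fun x => f x * (σ x - σ' x) with hC
  have hAb : ∀ x, |A x| ≤ β * (DΨ * tv) * L * σ x := by
    intro x
    rw [hA]
    have h1 : |Ψ σ x - Ψ σ' x| ≤ DΨ * tv := hLip σ σ' x hσ hσ' hσ1 hσ'1
    have h2 := hL x
    have h3 := hσ x
    calc |β * (Ψ σ x - Ψ σ' x) * (f (x + 1) - f x) * σ x|
        = β * |Ψ σ x - Ψ σ' x| * |f (x + 1) - f x| * σ x := by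
          rw [abs_mul, abs_mul, abs_mul, abs_of_pos hβ, abs_of_nonneg h3]
      _ ≤ β * (DΨ * tv) * L * σ x := by
          apply mul_le_mul_of_nonneg_right _ h3
          apply mul_le_mul (mul_le_mul_of_nonneg_left h1 hβ.le) h2 (abs_nonneg _)
          positivity
  have hBb : ∀ x, |B x| ≤ β * MΨ * L * |σ x - σ' x| := by
    intro x
    rw [hB]
    have h1 := hbound σ' x
    calc |β * Ψ σ' x * (f (x + 1) - f x) * (σ x - σ' x)|
        = β * Ψ σ' x * |f (x + 1) - f x| * |σ x - σ' x| := by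
          rw [abs_mul, abs_mul, abs_mul, abs_of_pos hβ, abs_of_nonneg h1.1]
      _ ≤ β * MΨ * L * |σ x - σ' x| := by
          apply mul_le_mul_of_nonneg_right _ (abs_nonneg _)
          apply mul_le_mul (mul_le_mul_of_nonneg_left h1.2 hβ.le) (hL x) (abs_nonneg _)
          positivity
  have hSumA : Summable A :=
    Summable.of_abs (Summable.of_nonneg_of_le (fun x => abs_nonneg _) hAb
      (hSumσ.mul_left _))
  have hSumB : Summable B :=
    Summable.of_abs (Summable.of_nonneg_of_le (fun x => abs_nonneg _) hBb
      (hda.mul_left _))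
  have hSumC : Summable C := by
    have : C = fun x => f x * σ x - f x * σ' x := by
      funext x; rw [hC]; ring
    rw [this]; exact hfσ.sub hfσ'
  -- summability of the two main series
  have hmain : ∀ (τ : ℕ → ℝ), (∀ n, 0 ≤ τ n) → Summable τ →
      Summable (fun k => f k * τ k) →
      Summable (fun x => (β * Ψ τ x * (f (x + 1) - f x) + (f 0 - f x)) * τ x) := by
    intro τ hτ hSumτ hfτ
    have h1 : Summable (fun x => β * Ψ τ x * (f (x + 1) - f x) * τ x) := by
      apply Summable.of_abs
      apply Summable.of_nonneg_of_le (fun x => abs_nonneg _) _ (hSumτ.mul_left (β * MΨ * L))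
      intro x
      have hb := hbound τ x
      calc |β * Ψ τ x * (f (x + 1) - f x) * τ x|
          = β * Ψ τ x * |f (x + 1) - f x| * τ x := by
            rw [abs_mul, abs_mul, abs_mul, abs_of_pos hβ, abs_of_nonneg hb.1,
              abs_of_nonneg (hτ x)]
        _ ≤ β * MΨ * L * τ x := by
            apply mul_le_mul_of_nonneg_right _ (hτ x)
            apply mul_le_mul (mul_le_mul_of_nonneg_left hb.2 hβ.le) (hL x) (abs_nonneg _)
            positivity
    have h2 : Summable (fun x => f 0 * τ x - f x * τ x) :=
      (hSumτ.mul_left (f 0)).sub hfτ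
    have := h1.add h2
    apply this.congr
    intro x; ring
  have hS : Summable (fun x => (β * Ψ σ x * (f (x + 1) - f x) + (f 0 - f x)) * σ x) :=
    hmain σ hσ hSumσ hfσ
  have hS' : Summable (fun x => (β * Ψ σ' x * (f (x + 1) - f x) + (f 0 - f x)) * σ' x) :=
    hmain σ' hσ' hSumσ' hfσ'
  -- key identity: difference of sums = ∑A + ∑B + f 0 * ∑(σ-σ') - ∑C
  have hsum0 : (∑' k, (σ k - σ' k)) = 0 := by
    rw [Summable.tsum_sub hSumσ hSumσ', hσ1, hσ'1]; ring
  have hkey : (∑' x, (β * Ψ σ x * (f (x + 1) - f x) + (f 0 - f x)) * σ x)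
      - (∑' x, (β * Ψ σ' x * (f (x + 1) - f x) + (f 0 - f x)) * σ' x)
      = (∑' x, A x) + (∑' x, B x) - (∑' x, C x) := by
    rw [← Summable.tsum_sub hS hS']
    have hfun : ∀ x, (β * Ψ σ x * (f (x + 1) - f x) + (f 0 - f x)) * σ x
        - (β * Ψ σ' x * (f (x + 1) - f x) + (f 0 - f x)) * σ' x
        = A x + B x + (f 0 * (σ x - σ' x) - C x) := by
      intro x; rw [hA, hB, hC]; ring
    calc (∑' x, ((β * Ψ σ x * (f (x + 1) - f x) + (f 0 - f x)) * σ x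
            - (β * Ψ σ' x * (f (x + 1) - f x) + (f 0 - f x)) * σ' x))
        = ∑' x, (A x + B x + (f 0 * (σ x - σ' x) - C x)) := by
          exact tsum_congr hfun
      _ = (∑' x, (A x + B x)) + ∑' x, (f 0 * (σ x - σ' x) - C x) := by
          exact Summable.tsum_add (hSumA.add hSumB) ((hd.mul_left (f 0)).sub hSumC)
      _ = ((∑' x, A x) + ∑' x, B x) + (f 0 * (∑' x, (σ x - σ' x)) - ∑' x, C x) := by
          rw [Summable.tsum_add hSumA hSumB, Summable.tsum_sub (hd.mul_left (f 0)) hSumC, tsum_mul_left]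
      _ = (∑' x, A x) + (∑' x, B x) - (∑' x, C x) := by rw [hsum0]; ring
  rw [hkey]
  -- bound the pieces
  have hAbound : |∑' x, A x| ≤ β * (DΨ * tv) * L := by
    calc |∑' x, A x| ≤ ∑' x, |A x| := abs_tsum_le_tsum_abs' A hSumA
      _ ≤ ∑' x, β * (DΨ * tv) * L * σ x :=
          Summable.tsum_le_tsum hAb hSumA.abs (hSumσ.mul_left _)
      _ = β * (DΨ * tv) * L := by rw [tsum_mul_left, hσ1, mul_one]
  have hBbound : |∑' x, B x| ≤ β * MΨ * L * (2 * tv) := by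
    calc |∑' x, B x| ≤ ∑' x, |B x| := abs_tsum_le_tsum_abs' B hSumB
      _ ≤ ∑' x, β * MΨ * L * |σ x - σ' x| :=
          Summable.tsum_le_tsum hBb hSumB.abs (hda.mul_left _)
      _ = β * MΨ * L * (2 * tv) := by rw [tsum_mul_left, htv]; ring
  have hCdef : (∑' x, C x) = ∑' x, f x * (σ x - σ' x) := rfl
  calc |(∑' x, A x) + (∑' x, B x) - (∑' x, C x)|
      ≤ |∑' x, A x| + |∑' x, B x| + |∑' x, C x| := by
        apply (abs_sub _ _).trans
        exact add_le_add_left (abs_add_le _ _) _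
    _ ≤ (β * (DΨ * tv) * L + β * MΨ * L * (2 * tv)) + |∑' x, C x| :=
        add_le_add_left (add_le_add hAbound hBbound) _
    _ ≤ 2 * β * L * (MΨ + DΨ) * tv + |∑' x, f x * (σ x - σ' x)| := by
        rw [hCdef]
        apply add_le_add_left
        nlinarith [mul_nonneg (mul_nonneg hβ.le hL0) (mul_nonneg hDtv htvnn),
          mul_nonneg hβ.le hL0, mul_nonneg hDtv htvnn]
end

section
/- Fix $\beta > 0$ and a bounded function $W: \mathbb{N} \to [c, C]$ with $0 < c \le C$. Then the equation $\beta = \sum_{n=0}^{\infty}\prod_{k=0}^{n}\frac{\beta W(k)}{\gamma + \beta W(k)}$ has a unique solution $\gamma = \gamma_\beta \in (0,\infty)$. -/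
open Finset

private lemma rw_geom_tsum {r : ℝ} (h0 : 0 ≤ r) (h1 : r < 1) :
    ∑' n : ℕ, r ^ (n + 1) = r / (1 - r) := by
  have h : ∀ n : ℕ, r ^ (n + 1) = r * r ^ n := fun n => by ring
  rw [tsum_congr h, tsum_mul_left, tsum_geometric_of_lt_one h0 h1, div_eq_mul_inv]

private lemma rw_prod_bounds (β c C : ℝ) (hβ : 0 < β) (hc : 0 < c)
    (W : ℕ → ℝ) (hW : ∀ k, W k ∈ Set.Icc c C) (a γ : ℝ) (ha : 0 < a) (haγ : a ≤ γ) (n : ℕ) :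
    0 < ∏ k ∈ Finset.range (n+1), (β * W k) / (γ + β * W k) ∧
    ∏ k ∈ Finset.range (n+1), (β * W k) / (γ + β * W k) ≤ (β * C / (a + β * C)) ^ (n+1) := by
  have hγ : 0 < γ := lt_of_lt_of_le ha haγ
  have hWpos : ∀ k, 0 < W k := fun k => lt_of_lt_of_le hc (hW k).1
  have hdpos : ∀ k, 0 < γ + β * W k := fun k => add_pos hγ (mul_pos hβ (hWpos k))
  have hC : 0 < C := lt_of_lt_of_le hc (le_trans (hW 0).1 (hW 0).2)
  have hdC : 0 < a + β * C := add_pos ha (mul_pos hβ hC)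
  constructor
  · exact Finset.prod_pos fun k _ => div_pos (mul_pos hβ (hWpos k)) (hdpos k)
  · calc ∏ k ∈ Finset.range (n+1), (β * W k) / (γ + β * W k)
        ≤ ∏ _k ∈ Finset.range (n+1), (β * C / (a + β * C)) := by
          apply Finset.prod_le_prod
          · exact fun k _ => le_of_lt (div_pos (mul_pos hβ (hWpos k)) (hdpos k))
          · intro k _
            rw [div_le_div_iff₀ (hdpos k) hdC]
            have h1 := (hW k).1; have h2 := (hW k).2
            nlinarith [mul_le_mul (mul_le_mul_of_nonneg_left h2 hβ.le) haγ ha.le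
              (mul_nonneg hβ.le hC.le)]
    _ = (β * C / (a + β * C)) ^ (n+1) := by
          rw [Finset.prod_const, Finset.card_range]

private lemma rw_r_lt_one (β C : ℝ) (hβ : 0 < β) (hC : 0 < C) (a : ℝ) (ha : 0 < a) :
    0 ≤ β * C / (a + β * C) ∧ β * C / (a + β * C) < 1 := by
  constructor
  · positivity
  · rw [div_lt_one (by positivity)]; linarith

private lemma rw_summable (β c C : ℝ) (hβ : 0 < β) (hc : 0 < c)
    (W : ℕ → ℝ) (hW : ∀ k, W k ∈ Set.Icc c C) (γ : ℝ) (hγ : 0 < γ) :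
    Summable (fun n : ℕ => ∏ k ∈ Finset.range (n+1), (β * W k) / (γ + β * W k)) := by
  have hC : 0 < C := lt_of_lt_of_le hc (le_trans (hW 0).1 (hW 0).2)
  obtain ⟨h0, h1⟩ := rw_r_lt_one β C hβ hC γ hγ
  apply Summable.of_nonneg_of_le
    (fun n => (rw_prod_bounds β c C hβ hc W hW γ γ hγ le_rfl n).1.le)
    (fun n => (rw_prod_bounds β c C hβ hc W hW γ γ hγ le_rfl n).2)
  simpa [pow_succ] using (summable_geometric_of_lt_one h0 h1).mul_right (β * C / (γ + β * C))

private lemma rw_tsum_le (β c C : ℝ) (hβ : 0 < β) (hc : 0 < c)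
    (W : ℕ → ℝ) (hW : ∀ k, W k ∈ Set.Icc c C) (γ : ℝ) (hγ : 0 < γ) :
    ∑' n : ℕ, ∏ k ∈ Finset.range (n+1), (β * W k) / (γ + β * W k) ≤ β * C / γ := by
  have hC : 0 < C := lt_of_lt_of_le hc (le_trans (hW 0).1 (hW 0).2)
  obtain ⟨h0, h1⟩ := rw_r_lt_one β C hβ hC γ hγ
  have hgs : Summable (fun n : ℕ => (β * C / (γ + β * C)) ^ (n+1)) := by
    simpa [pow_succ] using (summable_geometric_of_lt_one h0 h1).mul_right (β * C / (γ + β * C))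
  have := Summable.tsum_le_tsum (fun n => (rw_prod_bounds β c C hβ hc W hW γ γ hγ le_rfl n).2)
    (rw_summable β c C hβ hc W hW γ hγ) hgs
  refine this.trans (le_of_eq ?_)
  rw [rw_geom_tsum h0 h1]
  have hne : (0:ℝ) < γ + β * C := add_pos hγ (mul_pos hβ hC)
  rw [div_eq_div_iff (sub_pos.mpr h1).ne' hγ.ne']
  field_simp
  ring

private lemma rw_tsum_ge (β c C : ℝ) (hβ : 0 < β) (hc : 0 < c)
    (W : ℕ → ℝ) (hW : ∀ k, W k ∈ Set.Icc c C) (γ : ℝ) (hγ : 0 < γ) :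
    β * c / γ ≤ ∑' n : ℕ, ∏ k ∈ Finset.range (n+1), (β * W k) / (γ + β * W k) := by
  have hd : (0:ℝ) < γ + β * c := add_pos hγ (mul_pos hβ hc)
  have h0 : (0:ℝ) ≤ β * c / (γ + β * c) := by positivity
  have h1 : β * c / (γ + β * c) < 1 := by rw [div_lt_one hd]; linarith
  have hgs : Summable (fun n : ℕ => (β * c / (γ + β * c)) ^ (n+1)) := by
    simpa [pow_succ] using (summable_geometric_of_lt_one h0 h1).mul_right (β * c / (γ + β * c))
  have hle : ∀ n : ℕ, (β * c / (γ + β * c)) ^ (n+1)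
      ≤ ∏ k ∈ Finset.range (n+1), (β * W k) / (γ + β * W k) := by
    intro n
    have hrw : (β * c / (γ + β * c)) ^ (n+1)
        = ∏ _k ∈ Finset.range (n+1), (β * c / (γ + β * c)) := by
      rw [Finset.prod_const, Finset.card_range]
    rw [hrw]
    apply Finset.prod_le_prod
    · exact fun k _ => h0
    · intro k _
      have hWk : 0 < W k := lt_of_lt_of_le hc (hW k).1
      have hdk : 0 < γ + β * W k := add_pos hγ (mul_pos hβ hWk)
      rw [div_le_div_iff₀ hd hdk]
      have h1 := (hW k).1
      nlinarith [mul_le_mul_of_nonneg_left h1 (mul_nonneg hβ.le hγ.le)]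
  have := Summable.tsum_le_tsum hle hgs (rw_summable β c C hβ hc W hW γ hγ)
  refine le_trans (le_of_eq ?_) this
  rw [rw_geom_tsum h0 h1]
  rw [div_eq_div_iff hγ.ne' (sub_pos.mpr h1).ne']
  field_simp
  ring

private lemma rw_strict_anti (β c C : ℝ) (hβ : 0 < β) (hc : 0 < c)
    (W : ℕ → ℝ) (hW : ∀ k, W k ∈ Set.Icc c C) (γ₁ γ₂ : ℝ) (h1 : 0 < γ₁) (h12 : γ₁ < γ₂) :
    ∑' n : ℕ, ∏ k ∈ Finset.range (n+1), (β * W k) / (γ₂ + β * W k)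
      < ∑' n : ℕ, ∏ k ∈ Finset.range (n+1), (β * W k) / (γ₁ + β * W k) := by
  have h2 : 0 < γ₂ := h1.trans h12
  have hWpos : ∀ k, 0 < W k := fun k => lt_of_lt_of_le hc (hW k).1
  have hfle : ∀ k, (β * W k) / (γ₂ + β * W k) ≤ (β * W k) / (γ₁ + β * W k) := by
    intro k
    apply div_le_div_of_nonneg_left (mul_pos hβ (hWpos k)).le
      (add_pos h1 (mul_pos hβ (hWpos k)))
    linarith
  refine Summable.tsum_lt_tsum (i := 0) ?_ ?_ (rw_summable β c C hβ hc W hW γ₂ h2)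
    (rw_summable β c C hβ hc W hW γ₁ h1)
  · intro n
    apply Finset.prod_le_prod
    · intro k _
      exact le_of_lt (div_pos (mul_pos hβ (hWpos k)) (add_pos h2 (mul_pos hβ (hWpos k))))
    · exact fun k _ => hfle k
  · rw [show (0:ℕ)+1 = 1 from rfl, Finset.prod_range_one, Finset.prod_range_one]
    apply div_lt_div_of_pos_left (mul_pos hβ (hWpos 0))
      (add_pos h1 (mul_pos hβ (hWpos 0)))
    linarith

/-- The fixed point equation `β = ∑_{n≥0} ∏_{k=0}^{n} (β W(k)) / (γ + β W(k))`
characterizing the invariant distribution of the random weighted algorithm has a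
unique positive solution `γ`. -/
theorem randomWeighted_fixed_point_unique (β : ℝ) (hβ : 0 < β) (c C : ℝ)
    (hc : 0 < c) (hcC : c ≤ C) (W : ℕ → ℝ) (hW : ∀ k, W k ∈ Set.Icc c C) :
    ∃! γ : ℝ, 0 < γ ∧
      β = ∑' n : ℕ, ∏ k ∈ Finset.range (n + 1), (β * W k) / (γ + β * W k) := by
  have hC : 0 < C := lt_of_lt_of_le hc hcC
  set F : ℝ → ℝ := fun γ => ∑' n : ℕ, ∏ k ∈ Finset.range (n + 1), (β * W k) / (γ + β * W k)
    with hF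
  -- continuity on Icc c C
  have hcont : ContinuousOn F (Set.Icc c C) := by
    rw [continuousOn_iff_continuous_restrict]
    apply continuous_tsum (u := fun n : ℕ => (β * C / (c + β * C)) ^ (n+1))
    · intro n
      apply continuous_finset_prod
      intro k _
      refine continuous_const.div (continuous_subtype_val.add continuous_const) (fun x => ?_)
      have h1 : c ≤ x.1 := x.2.1
      have h2 : 0 < W k := lt_of_lt_of_le hc (hW k).1
      have : 0 < x.1 + β * W k := add_pos (lt_of_lt_of_le hc h1) (mul_pos hβ h2)
      exact this.ne'
    · obtain ⟨h0, h1⟩ := rw_r_lt_one β C hβ hC c hc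
      simpa [pow_succ] using (summable_geometric_of_lt_one h0 h1).mul_right (β * C / (c + β * C))
    · intro n x
      have hb := rw_prod_bounds β c C hβ hc W hW c x.1 hc x.2.1 n
      rw [Real.norm_eq_abs, abs_of_nonneg hb.1.le]
      exact hb.2
  -- existence via IVT
  have hFc : β ≤ F c := by
    have := rw_tsum_ge β c C hβ hc W hW c hc
    rw [mul_div_assoc, div_self hc.ne', mul_one] at this
    exact this
  have hFC : F C ≤ β := by
    have := rw_tsum_le β c C hβ hc W hW C hC
    rw [mul_div_assoc, div_self hC.ne', mul_one] at this
    exact this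
  have hmem : β ∈ Set.Icc (F C) (F c) := ⟨hFC, hFc⟩
  obtain ⟨γ, hγmem, hγeq⟩ := intermediate_value_Icc' hcC hcont hmem
  refine ⟨γ, ⟨lt_of_lt_of_le hc hγmem.1, hγeq.symm⟩, ?_⟩
  rintro γ' ⟨hγ'pos, hγ'eq⟩
  by_contra hne
  have hγpos : 0 < γ := lt_of_lt_of_le hc hγmem.1
  rcases lt_or_gt_of_ne hne with h | h
  · have hlt : F γ < F γ' := rw_strict_anti β c C hβ hc W hW γ' γ hγ'pos h
    have e' : F γ' = β := hγ'eq.symm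
    rw [hγeq, e'] at hlt
    exact lt_irrefl _ hlt
  · have hlt : F γ' < F γ := rw_strict_anti β c C hβ hc W hW γ γ' hγpos h
    have e' : F γ' = β := hγ'eq.symm
    rw [hγeq, e'] at hlt
    exact lt_irrefl _ hlt
end

section
/- Fix $d \ge 2$ and $\beta \ge 1/d$. Let $(\xi_n)$ satisfy $\xi_0 = 1$, $\xi_n = \beta(\xi_{n-1}^d - \xi_n^d)$, $0 \le \xi_n \le \xi_{n-1} \le 1$, and let $(\eta_n(t))_{t\ge 0}$ be differentiable functions with values in $[0,1]$, non-increasing in $n$, with $\eta_n'(t) = \beta(\eta_{n-1}(t)^d - \eta_n(t)^d) - \eta_n(t)$ for $n \ge 1$ and $\eta_0(t) = 1$. Then for all $n \ge 1$ and $t \ge 0$: $e^t(\eta_n(t) - \xi_n)^2 \le (1 + (d\beta)^2)\sum_{k=0}^{n-2}\frac{(d\beta)^{2k}t^k}{k!}$ (with the convention that for $n=1$ the right-hand side is $1$, i.e., $(\eta_1(t)-\xi_1)^2 \le e^{-t}$). -/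
lemma aux_pow_sub_abs_le (d : ℕ) (x y : ℝ) (hx0 : 0 ≤ x) (hx1 : x ≤ 1)
    (hy0 : 0 ≤ y) (hy1 : y ≤ 1) : |x ^ d - y ^ d| ≤ d * |x - y| := by
  rw [← geom_sum₂_mul, abs_mul]
  gcongr
  calc |∑ i ∈ Finset.range d, x ^ i * y ^ (d - 1 - i)|
      ≤ ∑ i ∈ Finset.range d, |x ^ i * y ^ (d - 1 - i)| := Finset.abs_sum_le_sum_abs _ _
    _ ≤ ∑ _i ∈ Finset.range d, (1 : ℝ) := by
        apply Finset.sum_le_sum; intro i _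
        rw [abs_mul, abs_pow, abs_pow, abs_of_nonneg hx0, abs_of_nonneg hy0]
        exact mul_le_one₀ (pow_le_one₀ hx0 hx1) (pow_nonneg hy0 _) (pow_le_one₀ hy0 hy1)
    _ = d := by simp

lemma aux_pow_sub_mul_nonneg (d : ℕ) (x y : ℝ) (hx : 0 ≤ x) (hy : 0 ≤ y) :
    0 ≤ (x - y) * (x ^ d - y ^ d) := by
  rcases le_total y x with h | h
  · have := pow_le_pow_left₀ hy h d
    nlinarith
  · have := pow_le_pow_left₀ hx h d
    nlinarith

lemma aux_le_of_deriv_le (F B F' B' : ℝ → ℝ)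
    (hF : ∀ s, 0 ≤ s → HasDerivAt F (F' s) s)
    (hB : ∀ s, 0 ≤ s → HasDerivAt B (B' s) s)
    (h0 : F 0 ≤ B 0) (hle : ∀ s, 0 ≤ s → F' s ≤ B' s)
    (t : ℝ) (ht : 0 ≤ t) : F t ≤ B t := by
  have key : MonotoneOn (fun s => B s - F s) (Set.Icc 0 t) := by
    apply monotoneOn_of_deriv_nonneg (convex_Icc 0 t)
    · intro s hs
      exact ((hB s hs.1).sub (hF s hs.1)).continuousAt.continuousWithinAt
    · intro s hs
      rw [interior_Icc] at hs
      exact ((hB s hs.1.le).sub (hF s hs.1.le)).differentiableAt.differentiableWithinAt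
    · intro s hs
      rw [interior_Icc] at hs
      rw [show (fun s => B s - F s) = B - F from rfl, ((hB s hs.1.le).sub (hF s hs.1.le)).deriv]
      have := hle s hs.1.le; linarith
  have h : B 0 - F 0 ≤ B t - F t := key (Set.left_mem_Icc.2 ht) (Set.right_mem_Icc.2 ht) ht
  linarith

lemma aux_sum_hasDerivAt (c : ℝ) (m : ℕ) (t : ℝ) :
    HasDerivAt (fun s => ∑ k ∈ Finset.range (m + 1), c ^ k * s ^ k / k.factorial)
      (c * ∑ k ∈ Finset.range m, c ^ k * t ^ k / k.factorial) t := by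
  induction m with
  | zero => simpa using hasDerivAt_const t (1 : ℝ)
  | succ m ih =>
      have hterm : HasDerivAt (fun s : ℝ => c ^ (m + 1) * s ^ (m + 1) / (m + 1).factorial)
          (c * (c ^ m * t ^ m / m.factorial)) t := by
        have key := (hasDerivAt_pow (m + 1) t).const_mul ((c ^ (m + 1)) / ((m + 1).factorial : ℝ))
        simp only [Nat.add_sub_cancel] at key
        have e1 : (fun s : ℝ => c ^ (m + 1) * s ^ (m + 1) / ((m + 1).factorial : ℝ))
            = (fun s : ℝ => c ^ (m + 1) / ((m + 1).factorial : ℝ) * s ^ (m + 1)) := by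
          funext s; ring
        have e2 : c * (c ^ m * t ^ m / m.factorial)
            = c ^ (m + 1) / ((m + 1).factorial : ℝ) * (((m + 1 : ℕ) : ℝ) * t ^ m) := by
          have h0 : (m.factorial : ℝ) ≠ 0 := Nat.cast_ne_zero.2 m.factorial_ne_zero
          have hm : ((m : ℝ) + 1) ≠ 0 := by positivity
          push_cast [Nat.factorial_succ]
          field_simp
          ring
        rw [e1, e2]
        exact key
      have h := ih.add hterm
      have heq : (fun s => ∑ k ∈ Finset.range (m + 1 + 1), c ^ k * s ^ k / k.factorial)
          = fun s => (∑ k ∈ Finset.range (m + 1), c ^ k * s ^ k / k.factorial)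
            + c ^ (m + 1) * s ^ (m + 1) / (m + 1).factorial := by
        funext s; rw [Finset.sum_range_succ]
      rw [heq]
      refine h.congr_deriv ?_
      rw [Finset.sum_range_succ]; ring


set_option maxHeartbeats 1000000 in
/-- Quantitative stability estimate for the tail probabilities of the power of
`d`-choices McKean-Vlasov process towards the invariant tail sequence `(ξ n)`. -/
theorem power_of_choices_stability (d : ℕ) (hd : 2 ≤ d) (β : ℝ) (hβ : 1 / d ≤ β)
    (ξ : ℕ → ℝ) (hξ0 : ξ 0 = 1)
    (hξrec : ∀ n : ℕ, 1 ≤ n → ξ n = β * ((ξ (n - 1)) ^ d - (ξ n) ^ d))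
    (hξnonneg : ∀ n, 0 ≤ ξ n) (hξmono : ∀ n, ξ (n + 1) ≤ ξ n) (hξle : ∀ n, ξ n ≤ 1)
    (η : ℕ → ℝ → ℝ)
    (hη0 : ∀ t, η 0 t = 1)
    (hηrange : ∀ n t, 0 ≤ t → η n t ∈ Set.Icc (0 : ℝ) 1)
    (hηmono : ∀ n t, 0 ≤ t → η (n + 1) t ≤ η n t)
    (hηderiv : ∀ n : ℕ, 1 ≤ n → ∀ t : ℝ, 0 ≤ t →
      HasDerivAt (η n) (β * ((η (n - 1) t) ^ d - (η n t) ^ d) - η n t) t) :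
    (∀ t : ℝ, 0 ≤ t → (η 1 t - ξ 1) ^ 2 ≤ Real.exp (-t)) ∧
    (∀ n : ℕ, 2 ≤ n → ∀ t : ℝ, 0 ≤ t →
      Real.exp t * (η n t - ξ n) ^ 2
        ≤ (1 + ((d : ℝ) * β) ^ 2) *
          ∑ k ∈ Finset.range (n - 1), ((d : ℝ) * β) ^ (2 * k) * t ^ k / k.factorial) := by
  have hd0 : (0:ℝ) < d := by
    have : (2:ℝ) ≤ d := by exact_mod_cast hd
    linarith
  have hβpos : 0 < β := lt_of_lt_of_le (by positivity) hβ
  have hdb : 1 ≤ (d:ℝ) * β := by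
    rw [div_le_iff₀ hd0] at hβ
    nlinarith
  obtain ⟨c, hcdef⟩ : ∃ c : ℝ, c = ((d:ℝ) * β) ^ 2 := ⟨_, rfl⟩
  have hc0 : 0 ≤ c := by rw [hcdef]; positivity
  have hc1 : 1 ≤ c := by rw [hcdef]; nlinarith
  have hsq1 : ∀ n, ∀ t : ℝ, 0 ≤ t → (η n t - ξ n) ^ 2 ≤ 1 := by
    intro n t ht
    obtain ⟨ha, hb⟩ := hηrange n t ht
    have h2 := hξnonneg n; have h3 := hξle n
    nlinarith
  -- derivative of F_n(t) = exp t * (η (n+1) t - ξ (n+1))^2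
  have hFd : ∀ n : ℕ, ∀ s : ℝ, 0 ≤ s →
      HasDerivAt (fun u => Real.exp u * (η (n+1) u - ξ (n+1)) ^ 2)
        (Real.exp s * ((η (n+1) s - ξ (n+1)) ^ 2
          + 2 * (η (n+1) s - ξ (n+1)) * (β * ((η n s) ^ d - (η (n+1) s) ^ d) - η (n+1) s))) s := by
    intro n s hs
    have h1 := hηderiv (n+1) (Nat.le_add_left 1 n) s hs
    simp only [Nat.add_sub_cancel] at h1
    have h2 := (h1.sub_const (ξ (n+1))).pow 2
    have h3 := (Real.hasDerivAt_exp s).mul h2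
    refine h3.congr_deriv ?_
    push_cast [Pi.pow_apply]
    ring
  -- derivative inequality
  have dineq : ∀ n : ℕ, ∀ s : ℝ, 0 ≤ s →
      Real.exp s * ((η (n+1) s - ξ (n+1)) ^ 2
          + 2 * (η (n+1) s - ξ (n+1)) * (β * ((η n s) ^ d - (η (n+1) s) ^ d) - η (n+1) s))
        ≤ c * (Real.exp s * (η n s - ξ n) ^ 2) := by
    intro n s hs
    obtain ⟨ha0, ha1⟩ := hηrange n s hs
    obtain ⟨hb0, hb1⟩ := hηrange (n+1) s hs
    have hp0 := hξnonneg n; have hp1 := hξle n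
    have hq0 := hξnonneg (n+1); have hq1 := hξle (n+1)
    have hrec : ξ (n+1) = β * ((ξ n) ^ d - (ξ (n+1)) ^ d) := by
      have h := hξrec (n+1) (Nat.le_add_left 1 n)
      simpa using h
    set a := η n s with ha; set b := η (n+1) s with hb
    set p := ξ n with hp; set q := ξ (n+1) with hq
    have h1 : 0 ≤ (b - q) * (b ^ d - q ^ d) := aux_pow_sub_mul_nonneg d b q hb0 hq0
    have h2 : |a ^ d - p ^ d| ≤ d * |a - p| := aux_pow_sub_abs_le d a p ha0 ha1 hp0 hp1
    have h3 : (b - q) * (a ^ d - p ^ d) ≤ |b - q| * (d * |a - p|) := by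
      calc (b - q) * (a ^ d - p ^ d) ≤ |(b - q) * (a ^ d - p ^ d)| := le_abs_self _
        _ = |b - q| * |a ^ d - p ^ d| := abs_mul _ _
        _ ≤ |b - q| * (d * |a - p|) := mul_le_mul_of_nonneg_left h2 (abs_nonneg _)
    have h4 : 2 * β * (|b - q| * (d * |a - p|)) ≤ c * (a - p) ^ 2 + (b - q) ^ 2 := by
      have e1 : |a - p| ^ 2 = (a - p) ^ 2 := sq_abs _
      have e2 : |b - q| ^ 2 = (b - q) ^ 2 := sq_abs _
      rw [hcdef]
      nlinarith [sq_nonneg ((d:ℝ) * β * |a - p| - |b - q|)]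
    have hD : β * (a ^ d - b ^ d) - b
        = β * (a ^ d - p ^ d) - β * (b ^ d - q ^ d) + (q - b) := by
      linear_combination -hrec
    have hX : (b - q) ^ 2 + 2 * (b - q) * (β * (a ^ d - b ^ d) - b) ≤ c * (a - p) ^ 2 := by
      rw [hD]
      have h5 : 2 * β * ((b - q) * (a ^ d - p ^ d)) ≤ 2 * β * (|b - q| * (d * |a - p|)) :=
        mul_le_mul_of_nonneg_left h3 (by positivity)
      have h6 : 0 ≤ β * ((b - q) * (b ^ d - q ^ d)) := mul_nonneg hβpos.le h1
      nlinarith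
    calc Real.exp s * ((b - q) ^ 2 + 2 * (b - q) * (β * (a ^ d - b ^ d) - b))
        ≤ Real.exp s * (c * (a - p) ^ 2) :=
          mul_le_mul_of_nonneg_left hX (Real.exp_nonneg s)
      _ = c * (Real.exp s * (a - p) ^ 2) := by ring
  -- Step 1: exp (2t) * (η 1 t - ξ 1)^2 ≤ 1
  have hrec1 : ξ 1 = β * (1 - (ξ 1) ^ d) := by
    have h := hξrec 1 le_rfl
    simpa [hξ0] using h
  have key1 : ∀ t : ℝ, 0 ≤ t → Real.exp (2 * t) * (η 1 t - ξ 1) ^ 2 ≤ 1 := by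
    intro t ht
    have h := aux_le_of_deriv_le
      (fun u => Real.exp (2 * u) * (η 1 u - ξ 1) ^ 2) (fun _ => 1)
      (fun s => Real.exp (2 * s) * (2 * (η 1 s - ξ 1) ^ 2
        + 2 * (η 1 s - ξ 1) * (β * (1 - (η 1 s) ^ d) - η 1 s)))
      (fun _ => 0) ?_ ?_ ?_ ?_ t ht
    · simpa using h
    · intro s hs
      have h1 := hηderiv 1 le_rfl s hs
      simp only [Nat.sub_self, hη0, one_pow] at h1
      have h2 := (h1.sub_const (ξ 1)).pow 2
      have he : HasDerivAt (fun u : ℝ => Real.exp (2 * u)) (Real.exp (2 * s) * 2) s := by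
        simpa using ((hasDerivAt_id s).const_mul (2:ℝ)).exp
      have h3 := he.mul h2
      refine h3.congr_deriv ?_
      push_cast [Pi.pow_apply]
      ring
    · intro s hs
      exact hasDerivAt_const s 1
    · simp only [mul_zero, Real.exp_zero, one_mul]
      exact hsq1 1 0 le_rfl
    · intro s hs
      show Real.exp (2 * s) * (2 * (η 1 s - ξ 1) ^ 2
        + 2 * (η 1 s - ξ 1) * (β * (1 - (η 1 s) ^ d) - η 1 s)) ≤ 0
      obtain ⟨hb0, hb1⟩ := hηrange 1 s hs
      have hq0 := hξnonneg 1
      have h1 : 0 ≤ (η 1 s - ξ 1) * ((η 1 s) ^ d - (ξ 1) ^ d) :=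
        aux_pow_sub_mul_nonneg d _ _ hb0 hq0
      have hD1 : β * (1 - (η 1 s) ^ d) - η 1 s
          = -(β * ((η 1 s) ^ d - (ξ 1) ^ d)) + (ξ 1 - η 1 s) := by
        linear_combination -hrec1
      rw [hD1]
      have hXle : 2 * (η 1 s - ξ 1) ^ 2
          + 2 * (η 1 s - ξ 1) * (-(β * ((η 1 s) ^ d - (ξ 1) ^ d)) + (ξ 1 - η 1 s)) ≤ 0 := by
        nlinarith [mul_nonneg hβpos.le h1]
      calc Real.exp (2 * s) * (2 * (η 1 s - ξ 1) ^ 2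
            + 2 * (η 1 s - ξ 1) * (-(β * ((η 1 s) ^ d - (ξ 1) ^ d)) + (ξ 1 - η 1 s)))
          ≤ Real.exp (2 * s) * 0 := mul_le_mul_of_nonneg_left hXle (Real.exp_nonneg _)
        _ = 0 := mul_zero _
  have key1' : ∀ s : ℝ, 0 ≤ s → Real.exp s * (η 1 s - ξ 1) ^ 2 ≤ Real.exp (-s) := by
    intro s hs
    have e : Real.exp s * (η 1 s - ξ 1) ^ 2
        = Real.exp (-s) * (Real.exp (2 * s) * (η 1 s - ξ 1) ^ 2) := by
      rw [← mul_assoc, ← Real.exp_add]; ring_nf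
    rw [e]
    calc Real.exp (-s) * (Real.exp (2 * s) * (η 1 s - ξ 1) ^ 2)
        ≤ Real.exp (-s) * 1 := mul_le_mul_of_nonneg_left (key1 s hs) (Real.exp_nonneg _)
      _ = Real.exp (-s) := mul_one _
  have hsum0 : ∀ M : ℕ, ∑ k ∈ Finset.range (M + 1), c ^ k * (0:ℝ) ^ k / k.factorial = 1 := by
    intro M
    rw [Finset.sum_range_succ']
    simp
  -- Main induction
  have main : ∀ n : ℕ, 2 ≤ n → ∀ t : ℝ, 0 ≤ t →
      Real.exp t * (η n t - ξ n) ^ 2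
        ≤ (1 + c) * ∑ k ∈ Finset.range (n - 1), c ^ k * t ^ k / k.factorial := by
    intro n hn
    induction n, hn using Nat.le_induction with
    | base =>
        intro t ht
        have h := aux_le_of_deriv_le
          (fun u => Real.exp u * (η 2 u - ξ 2) ^ 2)
          (fun u => 1 + c - c * Real.exp (-u))
          (fun s => Real.exp s * ((η 2 s - ξ 2) ^ 2
            + 2 * (η 2 s - ξ 2) * (β * ((η 1 s) ^ d - (η 2 s) ^ d) - η 2 s)))
          (fun s => c * Real.exp (-s)) ?_ ?_ ?_ ?_ t ht
        · have hB : 1 + c - c * Real.exp (-t) ≤ 1 + c := by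
            have : 0 ≤ c * Real.exp (-t) := mul_nonneg hc0 (Real.exp_nonneg _)
            linarith
          have e1 : (2 : ℕ) - 1 = 1 := rfl
          calc Real.exp t * (η 2 t - ξ 2) ^ 2 ≤ 1 + c - c * Real.exp (-t) := h
            _ ≤ 1 + c := hB
            _ = (1 + c) * ∑ k ∈ Finset.range (2 - 1), c ^ k * t ^ k / k.factorial := by
                rw [e1, Finset.sum_range_one]
                norm_num
        · intro s hs
          exact hFd 1 s hs
        · intro s hs
          have hne : HasDerivAt (fun u : ℝ => Real.exp (-u)) (-Real.exp (-s)) s := by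
            simpa using ((hasDerivAt_id s).neg).exp
          have h2 := (hne.const_mul c).const_sub (1 + c)
          refine h2.congr_deriv ?_
          ring
        · simp only [Real.exp_zero, one_mul, neg_zero, mul_one]
          have := hsq1 2 0 le_rfl
          linarith
        · intro s hs
          calc Real.exp s * ((η 2 s - ξ 2) ^ 2
                + 2 * (η 2 s - ξ 2) * (β * ((η 1 s) ^ d - (η 2 s) ^ d) - η 2 s))
              ≤ c * (Real.exp s * (η 1 s - ξ 1) ^ 2) := dineq 1 s hs
            _ ≤ c * Real.exp (-s) := mul_le_mul_of_nonneg_left (key1' s hs) hc0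
    | succ n hn ih =>
        intro t ht
        obtain ⟨m, rfl⟩ : ∃ m, n = m + 2 := ⟨n - 2, by omega⟩
        have e1 : m + 2 + 1 - 1 = m + 2 := rfl
        have e2 : m + 2 - 1 = m + 1 := rfl
        rw [e1]
        have h := aux_le_of_deriv_le
          (fun u => Real.exp u * (η (m + 3) u - ξ (m + 3)) ^ 2)
          (fun u => (1 + c) * ∑ k ∈ Finset.range (m + 2), c ^ k * u ^ k / k.factorial)
          (fun s => Real.exp s * ((η (m + 3) s - ξ (m + 3)) ^ 2
            + 2 * (η (m + 3) s - ξ (m + 3))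
              * (β * ((η (m + 2) s) ^ d - (η (m + 3) s) ^ d) - η (m + 3) s)))
          (fun s => (1 + c) * (c * ∑ k ∈ Finset.range (m + 1), c ^ k * s ^ k / k.factorial))
          ?_ ?_ ?_ ?_ t ht
        · exact h
        · intro s hs
          exact hFd (m + 2) s hs
        · intro s hs
          exact (aux_sum_hasDerivAt c (m + 1) s).const_mul (1 + c)
        · show Real.exp 0 * (η (m + 3) 0 - ξ (m + 3)) ^ 2
            ≤ (1 + c) * ∑ k ∈ Finset.range (m + 2), c ^ k * (0:ℝ) ^ k / k.factorial
          rw [Real.exp_zero, one_mul, hsum0 (m + 1)]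
          have := hsq1 (m + 3) 0 le_rfl
          linarith
        · intro s hs
          have hih := ih s hs
          rw [e2] at hih
          calc Real.exp s * ((η (m + 3) s - ξ (m + 3)) ^ 2
                + 2 * (η (m + 3) s - ξ (m + 3))
                  * (β * ((η (m + 2) s) ^ d - (η (m + 3) s) ^ d) - η (m + 3) s))
              ≤ c * (Real.exp s * (η (m + 2) s - ξ (m + 2)) ^ 2) := dineq (m + 2) s hs
            _ ≤ c * ((1 + c) * ∑ k ∈ Finset.range (m + 1), c ^ k * s ^ k / k.factorial) :=
                mul_le_mul_of_nonneg_left hih hc0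
            _ = (1 + c) * (c * ∑ k ∈ Finset.range (m + 1), c ^ k * s ^ k / k.factorial) := by
                ring
  constructor
  · intro t ht
    have h := key1 t ht
    have e : (η 1 t - ξ 1) ^ 2
        = Real.exp (-(2 * t)) * (Real.exp (2 * t) * (η 1 t - ξ 1) ^ 2) := by
      rw [← mul_assoc, ← Real.exp_add]; simp
    calc (η 1 t - ξ 1) ^ 2
        = Real.exp (-(2 * t)) * (Real.exp (2 * t) * (η 1 t - ξ 1) ^ 2) := e
      _ ≤ Real.exp (-(2 * t)) * 1 := mul_le_mul_of_nonneg_left h (Real.exp_nonneg _)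
      _ = Real.exp (-(2 * t)) := mul_one _
      _ ≤ Real.exp (-t) := Real.exp_le_exp.2 (by linarith)
  · intro n hn t ht
    have h := main n hn t ht
    rw [hcdef] at h
    simpa only [pow_mul] using h
end
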